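/- In the heterogeneous game, the profile d_i* = d_i^max for all i is a Nash equilibrium if and only if ε_i ≤ (ξ_i ℓ_i)^{-1} - Σ_j d_j^max for every user i. -/

import Mathlib

open Finset

/-- Payoff of user `i` in the federated unlearning data revocation game. -/
noncomputable def payoff {I : ℕ} (ξ ℓ θ ε dmax : Fin I → ℝ) (i : Fin I)
    (d : Fin I → ℝ) : ℝ :=
  Real.log (∑ j, d j + ε i) - ξ i * ℓ i * d i
    - θ i * d i * ∑ j ∈ Finset.univ.erase i, (1 - d j / dmax j) * (ℓ j) ^ 2

/-- `d` is a Nash equilibrium. -/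
def IsNash {I : ℕ} (ξ ℓ θ ε dmax : Fin I → ℝ) (d : Fin I → ℝ) : Prop :=
  ∀ i : Fin I, ∀ x ∈ Set.Icc (0 : ℝ) (dmax i),
    payoff ξ ℓ θ ε dmax i (Function.update d i x) ≤ payoff ξ ℓ θ ε dmax i d

lemma payoff_update {I : ℕ} (ξ ℓ θ ε dmax : Fin I → ℝ) (hdmax : ∀ i, 0 < dmax i)
    (i : Fin I) (x : ℝ) :
    payoff ξ ℓ θ ε dmax i (Function.update dmax i x)
      = Real.log ((∑ j, dmax j) - dmax i + x + ε i) - ξ i * ℓ i * x := by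
  unfold payoff
  have h1 : ∑ j, Function.update dmax i x j = (∑ j, dmax j) - dmax i + x := by
    rw [Finset.sum_update_of_mem (Finset.mem_univ i), Finset.sdiff_singleton_eq_erase,
      Finset.sum_erase_eq_sub (Finset.mem_univ i)]
    ring
  have h2 : ∑ j ∈ Finset.univ.erase i,
      (1 - Function.update dmax i x j / dmax j) * (ℓ j) ^ 2 = 0 := by
    apply Finset.sum_eq_zero
    intro j hj
    have hji : j ≠ i := Finset.ne_of_mem_erase hj
    rw [Function.update_of_ne hji, div_self (hdmax j).ne']
    ring
  rw [h1, h2, Function.update_self]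
  ring

/-- The auxiliary single-variable inequality: if `c * (A + m) ≤ 1`, then
`log (A + x) - c * x ≤ log (A + m) - c * m` for `0 ≤ x ≤ m`. -/
lemma log_aux {A m c x : ℝ} (hA : 0 < A + x) (hx : x ≤ m) (hc : 0 < c)
    (hcm : c * (A + m) ≤ 1) :
    Real.log (A + x) - c * x ≤ Real.log (A + m) - c * m := by
  have hAm : 0 < A + m := by linarith
  have hlog : Real.log ((A + x) / (A + m)) ≤ (A + x) / (A + m) - 1 :=
    Real.log_le_sub_one_of_pos (by positivity)
  rw [Real.log_div hA.ne' hAm.ne'] at hlog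
  have h2 : (A + x) / (A + m) - 1 = (x - m) / (A + m) := by field_simp; ring
  rw [h2] at hlog
  have h3 : (x - m) / (A + m) ≤ c * (x - m) := by
    rw [div_eq_mul_inv]
    have hinv : c ≤ (A + m)⁻¹ := by
      have h5 : c * (A + m) * (A + m)⁻¹ ≤ 1 * (A + m)⁻¹ :=
        mul_le_mul_of_nonneg_right hcm (inv_nonneg.mpr hAm.le)
      rwa [mul_assoc, mul_inv_cancel₀ hAm.ne', mul_one, one_mul] at h5
    have h6 : (A + m)⁻¹ * (x - m) ≤ c * (x - m) :=
      mul_le_mul_of_nonpos_right hinv (by linarith)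
    linarith [h6, mul_comm (x - m) (A + m)⁻¹]
  linarith

/-- Proposition 2 (no-revocation case): the profile `d_i* = d_i^max` for all `i`
is a Nash equilibrium iff `ε_i ≤ (ξ_i ℓ_i)⁻¹ - Σ_j d_j^max` for every user `i`. -/
theorem stmt5 (I : ℕ) (hI : 1 ≤ I) (ξ ℓ θ ε dmax : Fin I → ℝ)
    (hξ : ∀ i, 0 < ξ i) (hℓ : ∀ i, 0 < ℓ i) (hθ : ∀ i, 0 < θ i)
    (hε : ∀ i, 0 < ε i) (hdmax : ∀ i, 0 < dmax i) :
    IsNash ξ ℓ θ ε dmax dmax ↔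
      ∀ i : Fin I, ε i ≤ (ξ i * ℓ i)⁻¹ - ∑ j, dmax j := by
  have hS : ∀ i : Fin I, dmax i ≤ ∑ j, dmax j := fun i =>
    Finset.single_le_sum (fun j _ => (hdmax j).le) (Finset.mem_univ i)
  have key : ∀ i : Fin I, ∀ x : ℝ,
      payoff ξ ℓ θ ε dmax i (Function.update dmax i x)
        = Real.log ((∑ j, dmax j) - dmax i + x + ε i) - ξ i * ℓ i * x :=
    fun i x => payoff_update ξ ℓ θ ε dmax hdmax i x
  have hpay : ∀ i : Fin I, payoff ξ ℓ θ ε dmax i dmax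
      = Real.log ((∑ j, dmax j) + ε i) - ξ i * ℓ i * dmax i := by
    intro i
    have := key i (dmax i)
    rw [Function.update_eq_self] at this
    rw [this]; ring_nf
  constructor
  · -- Nash → inequality
    intro hN i
    by_contra hcon
    push_neg at hcon
    set c := ξ i * ℓ i with hcdef
    have hc : 0 < c := mul_pos (hξ i) (hℓ i)
    set S := ∑ j, dmax j with hSdef
    set m := dmax i with hmdef
    set A := S - m + ε i with hAdef
    -- we have 1/c < A + m  (since ε i > 1/c - S and A + m = S + ε i)
    have hAm : c⁻¹ < A + m := by
      have : (c)⁻¹ - S < ε i := by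
        have := hcon; linarith
      simp only [hAdef]; linarith
    have ht : max 0 (c⁻¹ - A) < m := by
      rcases max_cases (0:ℝ) (c⁻¹ - A) with ⟨h1, _⟩ | ⟨h1, _⟩ <;> rw [h1]
      · exact hdmax i
      · linarith
    set x := (max 0 (c⁻¹ - A) + m) / 2 with hxdef
    have hx0 : 0 ≤ x := by
      have := le_max_left (0:ℝ) (c⁻¹ - A); have := (hdmax i); simp only [hxdef]; linarith
    have hxm : x < m := by simp only [hxdef]; linarith
    have hAx : c⁻¹ < A + x := by
      have := le_max_right (0:ℝ) (c⁻¹ - A)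
      simp only [hxdef]; linarith
    have hAxpos : 0 < A + x := lt_trans (inv_pos.mpr hc) hAx
    have hAmpos : 0 < A + m := by linarith
    have hnash := hN i x ⟨hx0, hxm.le⟩
    rw [key i x, hpay i] at hnash
    simp only [← hcdef, ← hmdef] at hnash
    have hSA : S - m + x + ε i = A + x := by simp only [hAdef]; ring
    have hSA2 : S + ε i = A + m := by simp only [hAdef, hmdef]; ring
    rw [hSA, hSA2] at hnash
    -- but log(A+m) - log(A+x) ≤ (m-x)/(A+x) < c*(m-x)
    have hlog : Real.log ((A + m) / (A + x)) ≤ (A + m) / (A + x) - 1 :=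
      Real.log_le_sub_one_of_pos (by positivity)
    rw [Real.log_div hAmpos.ne' hAxpos.ne'] at hlog
    have h2 : (A + m) / (A + x) - 1 = (m - x) / (A + x) := by field_simp; ring
    rw [h2] at hlog
    have h3 : (m - x) / (A + x) < c * (m - x) := by
      rw [div_lt_iff₀ hAxpos]
      have h4 : 1 < c * (A + x) := by
        have : c⁻¹ * c < (A + x) * c := mul_lt_mul_of_pos_right hAx hc
        rw [inv_mul_cancel₀ hc.ne'] at this
        linarith [this]
      nlinarith [sub_pos.mpr hxm]
    have : Real.log (A + m) - c * m < Real.log (A + x) - c * x := by linarith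
    linarith
  · -- inequality → Nash
    intro h i x hx
    obtain ⟨hx0, hxm⟩ := hx
    rw [key i x, hpay i]
    set c := ξ i * ℓ i with hcdef
    have hc : 0 < c := mul_pos (hξ i) (hℓ i)
    set S := ∑ j, dmax j with hSdef
    set m := dmax i with hmdef
    set A := S - m + ε i with hAdef
    have hSA : S - m + x + ε i = A + x := by simp only [hAdef]; ring
    have hSA2 : S + ε i = A + m := by simp only [hAdef, hmdef]; ring
    rw [hSA, hSA2]
    have hAx : 0 < A + x := by
      have := hS i; have := hε i; simp only [hAdef]; linarith
    have hcm : c * (A + m) ≤ 1 := by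
      have hi := h i
      have hinv : 0 < c⁻¹ := inv_pos.mpr hc
      have hAm : A + m ≤ c⁻¹ := by simp only [hAdef]; rw [hcdef]; linarith [hi]
      calc c * (A + m) ≤ c * c⁻¹ := mul_le_mul_of_nonneg_left hAm hc.le
        _ = 1 := mul_inv_cancel₀ hc.ne'
    exact log_aux hAx hxm hc hcm
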